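/- Let n ≥ 1, i ∈ S_n, p ∈ {0,…,n}, and set (j, q) = Φ(i, p). Then for every 0 ≤ k < p, every simplicial set X and every simplex x of X of dimension m ≥ n − k − 1, one has D_i^k (s_{p−1−k} x) = s_q (D_j^k x). -/

import Mathlib

open CategoryTheory

/-- `memS n l i` means `i ∈ S_{n,l}`: a sequence of length `l` with
`0 ≤ i_s ≤ n - s` for `1 ≤ s ≤ l` (here `i.getD t 0` is the entry `i_{t+1}`). -/
def memS (n l : ℕ) (i : List ℕ) : Prop :=
  i.length = l ∧ ∀ t < l, i.getD t 0 + t + 1 ≤ n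

/-- Vertex map of the derived operator. -/
def derivedFun (f : ℕ → ℕ) : ℕ → ℕ := fun t => if t = 0 then 0 else f (t - 1) + 1

/-- Vertex map of the face map `δ_j`. -/
def deltaFun (j : ℕ) : ℕ → ℕ := fun t => if t < j then t else t + 1

/-- Vertex map of the degeneracy map `σ_j`. -/
def sigmaFun (j : ℕ) : ℕ → ℕ := fun t => if t ≤ j then t else t - 1

/-- Vertex map of the Szczarba operator `D_i^k`, defined by the recursion
`D_∅^0 = id`, `D_i^k = (D_{i'}^k)' s_0 ∂_{i_1 - k}` if `k < i_1`,
`D_i^k = (D_{i'}^k)'` if `k = i_1`, and `D_i^k = (D_{i'}^{k-1})' s_0` if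
`k > i_1`. -/
def DFun : List ℕ → ℕ → ℕ → ℕ
  | [], _ => id
  | (i1 :: i'), k =>
    if k < i1 then deltaFun (i1 - k) ∘ sigmaFun 0 ∘ derivedFun (DFun i' k)
    else if k = i1 then derivedFun (DFun i' k)
    else sigmaFun 0 ∘ derivedFun (DFun i' (k - 1))

/-- The morphism `[b] ⟶ [a]` in the simplex category whose vertex map is (the
monotone clamped version of) `f`.  When `f` is monotone and maps `[b]` into
`[a]`, this is exactly the morphism with vertex map `f`. -/
def mkHomF (a b : ℕ) (f : ℕ → ℕ) : (SimplexCategory.mk b ⟶ SimplexCategory.mk a) :=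
  SimplexCategory.mkHom
    { toFun := fun t => ⟨min ((Finset.range (t.1 + 1)).sup f) a,
        Nat.lt_succ_of_le (min_le_right _ _)⟩
      monotone' := fun u v huv => by
        simp only [Fin.mk_le_mk]
        exact min_le_min
          (Finset.sup_mono (Finset.range_subset_range.mpr (Nat.succ_le_succ huv))) le_rfl }

open Simplicial in
/-- The natural simplicial operator `X_a → X_b` corresponding to the vertex map
`f : [b] → [a]`. -/
def simpOp (X : SSet) (f : ℕ → ℕ) (a b : ℕ) (x : X _⦋a⦌) : X _⦋b⦌ :=
  X.map (mkHomF a b f).op x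

/-- The map `Φ : S_n × [n] → S_{n-1} × [n-1]`, `(i, p) ↦ (j, q)`. -/
def Phi : List ℕ → ℕ → List ℕ × ℕ
  | [], _ => ([], 0)
  | (i1 :: i'), p =>
    if p < i1 then ((i1 - 1) :: (Phi i' p).1, (Phi i' p).2 + 1)
    else if p = i1 ∨ p = i1 + 1 then (i', 0)
    else (i1 :: (Phi i' (p - 1)).1, (Phi i' (p - 1)).2 + 1)

/-! ### Auxiliary lemmas -/

/-- The "goodness" condition of `memS` phrased intrinsically. -/
def goodL (i : List ℕ) : Prop := ∀ t < i.length, i.getD t 0 + t + 1 ≤ i.length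

lemma goodL_cons {i1 : ℕ} {i' : List ℕ} (h : goodL (i1 :: i')) :
    goodL i' ∧ i1 ≤ i'.length := by
  constructor
  · intro t ht
    have h2 := h (t + 1) (by simp only [List.length_cons]; omega)
    simp only [List.getD_cons_succ, List.length_cons] at h2
    omega
  · have h2 := h 0 (by simp)
    simp only [List.getD_cons_zero, List.length_cons] at h2
    omega

lemma sigmaFun_mono (j : ℕ) : Monotone (sigmaFun j) := by
  intro u v huv; simp only [sigmaFun]; split_ifs <;> omega

lemma deltaFun_mono (j : ℕ) : Monotone (deltaFun j) := by
  intro u v huv; simp only [deltaFun]; split_ifs <;> omega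

lemma derivedFun_mono {f : ℕ → ℕ} (hf : Monotone f) : Monotone (derivedFun f) := by
  intro u v huv; simp only [derivedFun]
  split_ifs with h1 h2 h3
  · exact le_rfl
  · exact Nat.zero_le _
  · omega
  · exact Nat.succ_le_succ (hf (by omega))

/-- Unfolding lemmas for `DFun` and `Phi`. -/
lemma DFun_cons_lt {i1 k : ℕ} (i' : List ℕ) (h : k < i1) :
    DFun (i1 :: i') k = deltaFun (i1 - k) ∘ sigmaFun 0 ∘ derivedFun (DFun i' k) := by
  simp only [DFun]; rw [if_pos h]

lemma DFun_cons_eq {i1 k : ℕ} (i' : List ℕ) (h : k = i1) :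
    DFun (i1 :: i') k = derivedFun (DFun i' k) := by
  simp only [DFun]; rw [if_neg (by omega), if_pos h]

lemma DFun_cons_gt {i1 k : ℕ} (i' : List ℕ) (h : i1 < k) :
    DFun (i1 :: i') k = sigmaFun 0 ∘ derivedFun (DFun i' (k - 1)) := by
  simp only [DFun]; rw [if_neg (by omega), if_neg (by omega)]

lemma Phi_cons_lt {i1 p : ℕ} (i' : List ℕ) (h : p < i1) :
    Phi (i1 :: i') p = ((i1 - 1) :: (Phi i' p).1, (Phi i' p).2 + 1) := by
  simp only [Phi]; rw [if_pos h]

lemma Phi_cons_mid {i1 p : ℕ} (i' : List ℕ) (h : p = i1 ∨ p = i1 + 1) :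
    Phi (i1 :: i') p = (i', 0) := by
  simp only [Phi]; rw [if_neg (by omega), if_pos h]

lemma Phi_cons_gt {i1 p : ℕ} (i' : List ℕ) (h : i1 + 1 < p) :
    Phi (i1 :: i') p = (i1 :: (Phi i' (p - 1)).1, (Phi i' (p - 1)).2 + 1) := by
  simp only [Phi]; rw [if_neg (by omega), if_neg (by omega)]

lemma DFun_mono : ∀ (i : List ℕ) (k : ℕ), Monotone (DFun i k)
  | [], k => fun _ _ h => h
  | (i1 :: i'), k => by
    rcases Nat.lt_trichotomy k i1 with h | h | h
    · rw [DFun_cons_lt i' h]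
      exact (deltaFun_mono _).comp ((sigmaFun_mono 0).comp
        (derivedFun_mono (DFun_mono i' k)))
    · rw [DFun_cons_eq i' h]
      exact derivedFun_mono (DFun_mono i' k)
    · rw [DFun_cons_gt i' h]
      exact (sigmaFun_mono 0).comp (derivedFun_mono (DFun_mono i' (k - 1)))

lemma derivedFun_zero (f : ℕ → ℕ) : derivedFun f 0 = 0 := by simp [derivedFun]

lemma derivedFun_succ (f : ℕ → ℕ) (t : ℕ) : derivedFun f (t + 1) = f t + 1 := by
  simp [derivedFun]

lemma sigmaFun_apply_zero (j : ℕ) : sigmaFun j 0 = 0 := by simp [sigmaFun]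

lemma sigmaFun_zero_succ (t : ℕ) : sigmaFun 0 (t + 1) = t := by simp [sigmaFun]

lemma sigmaFun_succ_succ (q t : ℕ) : sigmaFun (q + 1) (t + 1) = sigmaFun q t + 1 := by
  simp only [sigmaFun]; split_ifs <;> omega

lemma deltaFun_zero_of_pos {j : ℕ} (h : 0 < j) : deltaFun j 0 = 0 := by
  simp [deltaFun, h]

lemma DFun_zero : ∀ (i : List ℕ) (k : ℕ), DFun i k 0 = 0
  | [], k => rfl
  | (i1 :: i'), k => by
    rcases Nat.lt_trichotomy k i1 with h | h | h
    · rw [DFun_cons_lt i' h]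
      simp only [Function.comp_apply, derivedFun_zero, sigmaFun_apply_zero,
        deltaFun_zero_of_pos (show 0 < i1 - k by omega)]
    · rw [DFun_cons_eq i' h, derivedFun_zero]
    · rw [DFun_cons_gt i' h]
      simp only [Function.comp_apply, derivedFun_zero, sigmaFun_apply_zero]

lemma DFun_ge : ∀ (i : List ℕ), goodL i → ∀ k, k ≤ i.length →
    ∀ t, i.length ≤ t → DFun i k t = t - k
  | [], _, k, hk, t, _ => by
    obtain rfl : k = 0 := by simpa using hk
    rfl
  | (i1 :: i'), hg, k, hk, t, ht => by
    obtain ⟨hg', hi1⟩ := goodL_cons hg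
    simp only [List.length_cons] at hk ht
    obtain ⟨t', rfl⟩ : ∃ t', t = t' + 1 := ⟨t - 1, by omega⟩
    have ht' : i'.length ≤ t' := by omega
    rcases Nat.lt_trichotomy k i1 with h | h | h
    · have hrec := DFun_ge i' hg' k (by omega) t' ht'
      rw [DFun_cons_lt i' h]
      simp only [Function.comp_apply, derivedFun_succ, sigmaFun_zero_succ, hrec, deltaFun]
      split_ifs <;> omega
    · have hrec := DFun_ge i' hg' k (by omega) t' ht'
      rw [DFun_cons_eq i' h, derivedFun_succ, hrec]; omega
    · have hrec := DFun_ge i' hg' (k - 1) (by omega) t' ht'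
      rw [DFun_cons_gt i' h]
      simp only [Function.comp_apply, derivedFun_succ, sigmaFun_zero_succ, hrec]; omega

lemma Phi_good : ∀ (i : List ℕ), goodL i → ∀ p, p ≤ i.length → 1 ≤ i.length →
    (Phi i p).1.length = i.length - 1 ∧ goodL (Phi i p).1 ∧ (Phi i p).2 ≤ i.length - 1
  | [], _, p, _, h1 => by simp at h1
  | (i1 :: i'), hg, p, hp, _ => by
    obtain ⟨hg', hi1⟩ := goodL_cons hg
    simp only [List.length_cons] at hp ⊢
    rcases Nat.lt_trichotomy p i1 with h1 | h1 | h1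
    · -- p < i1
      rw [Phi_cons_lt i' h1]
      have hn' : 1 ≤ i'.length := by omega
      obtain ⟨hl, hgj, hq⟩ := Phi_good i' hg' p (by omega) hn'
      refine ⟨by simp only [List.length_cons, hl]; omega, ?_, by omega⟩
      intro t ht
      simp only [List.length_cons, hl] at ht ⊢
      cases t with
      | zero => simp only [List.getD_cons_zero]; omega
      | succ t =>
        simp only [List.getD_cons_succ]
        have := hgj t (by omega)
        omega
    · -- p = i1
      rw [Phi_cons_mid i' (Or.inl h1)]
      exact ⟨rfl, hg', Nat.zero_le _⟩
    · rcases Nat.lt_or_ge (i1 + 1) p with h2 | h2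
      · -- p > i1 + 1
        rw [Phi_cons_gt i' h2]
        have hn' : 1 ≤ i'.length := by omega
        obtain ⟨hl, hgj, hq⟩ := Phi_good i' hg' (p - 1) (by omega) hn'
        refine ⟨by simp only [List.length_cons, hl]; omega, ?_, by omega⟩
        intro t ht
        simp only [List.length_cons, hl] at ht ⊢
        cases t with
        | zero => simp only [List.getD_cons_zero]; omega
        | succ t =>
          simp only [List.getD_cons_succ]
          have := hgj t (by omega)
          omega
      · -- p = i1 + 1
        rw [Phi_cons_mid i' (Or.inr (by omega))]
        exact ⟨rfl, hg', Nat.zero_le _⟩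

/-- The key combinatorial identity. -/
lemma key_identity : ∀ (i : List ℕ), goodL i → ∀ p, p ≤ i.length → ∀ k, k < p → ∀ t,
    sigmaFun (p - 1 - k) (DFun i k t)
      = DFun (Phi i p).1 k (sigmaFun (Phi i p).2 t)
  | [], _, p, hp, k, hk, t => by simp at hp; omega
  | (i1 :: i'), hg, p, hp, k, hk, t => by
    obtain ⟨hg', hi1⟩ := goodL_cons hg
    simp only [List.length_cons] at hp
    rcases Nat.lt_trichotomy p i1 with h1 | h1 | h1
    · -- Case B : p < i1; then k < p < i1
      have hki1 : k < i1 := by omega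
      have IH := key_identity i' hg' p (by omega) k hk
      rw [Phi_cons_lt i' h1, DFun_cons_lt i' hki1,
        DFun_cons_lt (Phi i' p).1 (show k < i1 - 1 by omega)]
      cases t with
      | zero =>
        simp only [Function.comp_apply, sigmaFun_apply_zero, derivedFun_zero,
          deltaFun_zero_of_pos (show 0 < i1 - k by omega),
          deltaFun_zero_of_pos (show 0 < i1 - 1 - k by omega)]
      | succ t =>
        simp only [Function.comp_apply, derivedFun_succ, sigmaFun_zero_succ,
          sigmaFun_succ_succ, derivedFun_succ]
        rw [← IH t]
        generalize DFun i' k t = A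
        simp only [sigmaFun, deltaFun]
        split_ifs <;> omega
    · -- Case A1 : p = i1, so k < i1
      have hki1 : k < i1 := by omega
      rw [Phi_cons_mid i' (Or.inl h1), DFun_cons_lt i' hki1]
      cases t with
      | zero =>
        simp only [Function.comp_apply, sigmaFun_apply_zero, derivedFun_zero,
          deltaFun_zero_of_pos (show 0 < i1 - k by omega), DFun_zero]
      | succ t =>
        simp only [Function.comp_apply, derivedFun_succ, sigmaFun_zero_succ]
        generalize DFun i' k t = A
        simp only [sigmaFun, deltaFun]
        split_ifs <;> omega
    · rcases Nat.lt_or_ge (i1 + 1) p with h2 | h2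
      · -- Case C : p > i1 + 1
        rw [Phi_cons_gt i' h2]
        rcases Nat.lt_trichotomy k i1 with hki1 | hki1 | hki1
        · -- C1 : k < i1
          have IH := key_identity i' hg' (p - 1) (by omega) k (by omega)
          rw [DFun_cons_lt i' hki1, DFun_cons_lt (Phi i' (p-1)).1 hki1]
          cases t with
          | zero =>
            simp only [Function.comp_apply, sigmaFun_apply_zero, derivedFun_zero,
              deltaFun_zero_of_pos (show 0 < i1 - k by omega)]
          | succ t =>
            simp only [Function.comp_apply, derivedFun_succ, sigmaFun_zero_succ,
              sigmaFun_succ_succ]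
            rw [← IH t]
            generalize DFun i' k t = A
            simp only [sigmaFun, deltaFun]
            split_ifs <;> omega
        · -- C2 : k = i1
          have IH := key_identity i' hg' (p - 1) (by omega) k (by omega)
          rw [DFun_cons_eq i' hki1, DFun_cons_eq (Phi i' (p-1)).1 hki1]
          cases t with
          | zero =>
            simp only [sigmaFun_apply_zero, derivedFun_zero]
          | succ t =>
            simp only [derivedFun_succ, sigmaFun_succ_succ]
            rw [← IH t]
            generalize DFun i' k t = A
            simp only [sigmaFun]
            split_ifs <;> omega
        · -- C3 : k > i1
          have IH := key_identity i' hg' (p - 1) (by omega) (k - 1) (by omega)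
          rw [DFun_cons_gt i' hki1, DFun_cons_gt (Phi i' (p-1)).1 hki1]
          cases t with
          | zero =>
            simp only [Function.comp_apply, sigmaFun_apply_zero, derivedFun_zero]
          | succ t =>
            simp only [Function.comp_apply, derivedFun_succ, sigmaFun_zero_succ,
              sigmaFun_succ_succ]
            have IH' := IH t
            rw [show p - 1 - 1 - (k - 1) = p - 1 - k by omega] at IH'
            exact IH'
      · -- Case A2 : p = i1 + 1, k ≤ i1
        have hp1 : p = i1 + 1 := by omega
        rw [Phi_cons_mid i' (Or.inr hp1)]
        rcases Nat.lt_or_ge k i1 with hki1 | hki1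
        · rw [DFun_cons_lt i' hki1]
          cases t with
          | zero =>
            simp only [Function.comp_apply, sigmaFun_apply_zero, derivedFun_zero,
              deltaFun_zero_of_pos (show 0 < i1 - k by omega), DFun_zero]
          | succ t =>
            simp only [Function.comp_apply, derivedFun_succ, sigmaFun_zero_succ]
            generalize DFun i' k t = A
            simp only [sigmaFun, deltaFun]
            split_ifs <;> omega
        · have hki1' : k = i1 := by omega
          rw [DFun_cons_eq i' hki1']
          cases t with
          | zero =>
            simp only [sigmaFun_apply_zero, derivedFun_zero, DFun_zero]
          | succ t =>
            rw [derivedFun_succ, sigmaFun_zero_succ,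
              show p - 1 - k = 0 by omega, sigmaFun_zero_succ]

/-! ### From vertex maps to simplicial operators -/

lemma mkHomF_apply (a b : ℕ) (f : ℕ → ℕ) (hf : Monotone f) (hfa : ∀ u ≤ b, f u ≤ a)
    (t : Fin (b + 1)) : ((mkHomF a b f).toOrderHom t : ℕ) = f t.1 := by
  have hsup : (Finset.range (t.1 + 1)).sup f = f t.1 := by
    apply le_antisymm
    · exact Finset.sup_le fun u hu => hf (by simpa [Nat.lt_succ_iff] using hu)
    · exact Finset.le_sup (Finset.mem_range.mpr (Nat.lt_succ_self _))
  show min ((Finset.range (t.1 + 1)).sup f) a = f t.1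
  rw [hsup]
  exact min_eq_left (hfa t.1 (Nat.lt_succ_iff.mp t.isLt))

lemma simpOp_simpOp (X : SSet) (f g : ℕ → ℕ) (a b c : ℕ)
    (hf : Monotone f) (hfa : ∀ u ≤ b, f u ≤ a)
    (hg : Monotone g) (hgb : ∀ u ≤ c, g u ≤ b)
    (x : X.obj (Opposite.op (SimplexCategory.mk a))) :
    simpOp X g b c (simpOp X f a b x) = simpOp X (f ∘ g) a c x := by
  have hcomp : mkHomF b c g ≫ mkHomF a b f = mkHomF a c (f ∘ g) := by
    apply SimplexCategory.Hom.ext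
    ext t
    have h1 : ((mkHomF b c g).toOrderHom t : ℕ) = g t.1 := mkHomF_apply b c g hg hgb t
    have h2 : ∀ u : Fin (b + 1), ((mkHomF a b f).toOrderHom u : ℕ) = f u.1 :=
      mkHomF_apply a b f hf hfa
    have h3 : ((mkHomF a c (f ∘ g)).toOrderHom t : ℕ) = f (g t.1) :=
      mkHomF_apply a c (f ∘ g) (hf.comp hg)
        (fun u hu => hfa _ (hgb u hu)) t
    simp only [SimplexCategory.comp_toOrderHom, OrderHom.comp_coe, Function.comp_apply]
    rw [h3, h2, h1]
  simp only [simpOp, ← FunctorToTypes.map_comp_apply, ← op_comp, hcomp]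

open Simplicial

/-- For `n ≥ 1`, `i ∈ S_n`, `p ∈ {0, …, n}`,
`(j, q) = Φ(i, p)`, `0 ≤ k < p`, any simplicial set `X` and any simplex `x` of
dimension `m ≥ n - k - 1`:  `D_i^k (s_{p-1-k} x) = s_q (D_j^k x)`. -/
theorem szczarba_D_degeneracy_low (n : ℕ) (hn : 1 ≤ n) (i : List ℕ) (hi : memS n n i)
    (p : ℕ) (hp : p ≤ n) (k : ℕ) (hk : k < p)
    (X : SSet) (m : ℕ) (hm : n - k - 1 ≤ m) (x : X _⦋m⦌) :
    simpOp X (DFun i k) (m + 1) (m + k + 1)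
        (simpOp X (sigmaFun (p - 1 - k)) m (m + 1) x)
      = simpOp X (sigmaFun (Phi i p).2) (m + k) (m + k + 1)
          (simpOp X (DFun (Phi i p).1 k) m (m + k) x) := by
  have hlen := hi.1
  have hgood : goodL i := by
    intro t ht
    rw [hlen] at ht ⊢
    exact hi.2 t ht
  subst hlen
  obtain ⟨hjlen, hjgood, hq⟩ := Phi_good i hgood p hp hn
  have hpm : p - 1 - k ≤ m := by omega
  have bound1 : ∀ u ≤ m + 1, sigmaFun (p - 1 - k) u ≤ m := by
    intro u hu; simp only [sigmaFun]; split_ifs <;> omega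
  have bound2 : ∀ u ≤ m + k + 1, DFun i k u ≤ m + 1 := by
    intro u hu
    rcases le_or_gt i.length u with h | h
    · rw [DFun_ge i hgood k (by omega) u h]; omega
    · have h1 : DFun i k u ≤ DFun i k i.length := DFun_mono i k h.le
      rw [DFun_ge i hgood k (by omega) i.length le_rfl] at h1
      omega
  have bound3 : ∀ u ≤ m + k, DFun (Phi i p).1 k u ≤ m := by
    intro u hu
    rcases le_or_gt (Phi i p).1.length u with h | h
    · rw [DFun_ge _ hjgood k (by omega) u h]; omega
    · have h1 : DFun (Phi i p).1 k u ≤ DFun (Phi i p).1 k (Phi i p).1.length :=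
        DFun_mono _ k h.le
      rw [DFun_ge _ hjgood k (by omega) _ le_rfl] at h1
      omega
  have bound4 : ∀ u ≤ m + k + 1, sigmaFun (Phi i p).2 u ≤ m + k := by
    intro u hu; simp only [sigmaFun]; split_ifs <;> omega
  rw [simpOp_simpOp X (sigmaFun (p - 1 - k)) (DFun i k) m (m + 1) (m + k + 1)
      (sigmaFun_mono _) bound1 (DFun_mono i k) bound2 x,
    simpOp_simpOp X (DFun (Phi i p).1 k) (sigmaFun (Phi i p).2) m (m + k) (m + k + 1)
      (DFun_mono _ k) bound3 (sigmaFun_mono _) bound4 x]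
  congr 1
  funext t
  exact key_identity i hgood p hp k hk t
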